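/- Assume (D+) and let (V,u) satisfy the monomer-equation setting with total mass M. If V(0) < d(0) and M ≤ d(0), then |M − V(t)| ≤ (M − V(0)) e^{−αt} for all t ≥ 0. -/

import Mathlib

open Set Filter Topology MeasureTheory

/-- Assumption (D+): `d : [0,∞) → [0,∞)` is C¹ with `0 < α ≤ d'(x) ≤ β` for all `x ≥ 0`. -/
structure DPlus (d d' : ℝ → ℝ) (α β : ℝ) : Prop where
  nonneg : ∀ x ∈ Set.Ici (0:ℝ), 0 ≤ d x
  hasDeriv : ∀ x ∈ Set.Ici (0:ℝ), HasDerivWithinAt d (d' x) (Set.Ici 0) x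
  contDeriv : ContinuousOn d' (Set.Ici 0)
  alpha_pos : 0 < α
  deriv_lb : ∀ x ∈ Set.Ici (0:ℝ), α ≤ d' x
  deriv_ub : ∀ x ∈ Set.Ici (0:ℝ), d' x ≤ β

/-- The monomer-equation setting with total mass `M`: `V` is C¹ (derivative `V'`) and
bounded, `u(t,·) ≥ 0` with `(1+x)u(t,x)` integrable, the moments
`t ↦ ∫₀^∞ u(t,x) dx` and `t ↦ ∫₀^∞ d(x)u(t,x) dx` are continuous,
`V' = −V ∫u + ∫ d u`, and `V(t) + ∫₀^∞ x u(t,x) dx = M`. -/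
structure MonomerSetting (d : ℝ → ℝ) (M : ℝ) (V V' : ℝ → ℝ) (u : ℝ → ℝ → ℝ) : Prop where
  V_hasDeriv : ∀ t ∈ Set.Ici (0:ℝ), HasDerivWithinAt V (V' t) (Set.Ici 0) t
  V'_cont : ContinuousOn V' (Set.Ici 0)
  V_bdd : ∃ K : ℝ, ∀ t ∈ Set.Ici (0:ℝ), |V t| ≤ K
  u_nonneg : ∀ t ∈ Set.Ici (0:ℝ), ∀ x ∈ Set.Ici (0:ℝ), 0 ≤ u t x
  u_int : ∀ t ∈ Set.Ici (0:ℝ), IntegrableOn (fun x => (1 + x) * u t x) (Set.Ioi 0)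
  du_int : ∀ t ∈ Set.Ici (0:ℝ), IntegrableOn (fun x => d x * u t x) (Set.Ioi 0)
  rho_cont : ContinuousOn (fun t => ∫ x in Set.Ioi (0:ℝ), u t x) (Set.Ici 0)
  du_cont : ContinuousOn (fun t => ∫ x in Set.Ioi (0:ℝ), d x * u t x) (Set.Ici 0)
  V_ode : ∀ t ∈ Set.Ici (0:ℝ),
    V' t = -V t * (∫ x in Set.Ioi (0:ℝ), u t x) + ∫ x in Set.Ioi (0:ℝ), d x * u t x
  mass : ∀ t ∈ Set.Ici (0:ℝ), V t + ∫ x in Set.Ioi (0:ℝ), x * u t x = M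

/-- Proposition 1.1, case 2: under (D+), in the monomer-equation setting
with total mass `M`, if `V(0) < d(0)` and `M ≤ d(0)` then
`|M − V(t)| ≤ (M − V(0)) e^{−αt}` for all `t ≥ 0`. -/
theorem monomer_trivial_dynamics
    (d d' : ℝ → ℝ) (α β : ℝ) (hD : DPlus d d' α β)
    (M : ℝ) (hM : 0 < M)
    (V V' : ℝ → ℝ) (u : ℝ → ℝ → ℝ)
    (hset : MonomerSetting d M V V' u)
    (hV0 : V 0 < d 0) (hMd : M ≤ d 0) :
    ∀ t ∈ Ici (0:ℝ), |M - V t| ≤ (M - V 0) * Real.exp (-α * t) := by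
  -- Preliminaries
  have hVd : ∀ t ∈ Set.Ici (0:ℝ), HasDerivWithinAt V (V' t) (Set.Ici 0) t := hset.V_hasDeriv
  -- measurability of u t on Ioi 0
  have humeas : ∀ t ∈ Set.Ici (0:ℝ),
      AEStronglyMeasurable (u t) (volume.restrict (Set.Ioi 0)) := by
    intro t ht
    have hf := (hset.u_int t ht).aestronglyMeasurable
    have h2 : AEStronglyMeasurable (fun x => ((1+x) * u t x) * (1+x)⁻¹)
        (volume.restrict (Set.Ioi 0)) :=
      hf.mul ((measurable_const.add measurable_id).inv.aestronglyMeasurable)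
    refine h2.congr ?_
    filter_upwards [ae_restrict_mem measurableSet_Ioi] with x hx
    have hx' : (0:ℝ) < x := hx
    have hx1 : (1:ℝ) + x ≠ 0 := by linarith
    field_simp
  have hu_int : ∀ t ∈ Set.Ici (0:ℝ), IntegrableOn (u t) (Set.Ioi 0) := by
    intro t ht
    refine (hset.u_int t ht).mono' (humeas t ht) ?_
    filter_upwards [ae_restrict_mem measurableSet_Ioi] with x hx
    have hx' : (0:ℝ) < x := hx
    have hu := hset.u_nonneg t ht x (Set.mem_Ici.mpr (le_of_lt hx))
    rw [Real.norm_eq_abs, abs_of_nonneg hu]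
    nlinarith [mul_nonneg hx'.le hu]
  have hxu_int : ∀ t ∈ Set.Ici (0:ℝ), IntegrableOn (fun x => x * u t x) (Set.Ioi 0) := by
    intro t ht
    refine (hset.u_int t ht).mono'
      ((aestronglyMeasurable_id.mul (humeas t ht))) ?_
    filter_upwards [ae_restrict_mem measurableSet_Ioi] with x hx
    have hx' : (0:ℝ) < x := hx
    have hu := hset.u_nonneg t ht x (Set.mem_Ici.mpr (le_of_lt hx))
    rw [Real.norm_eq_abs, abs_of_nonneg (mul_nonneg hx'.le hu)]
    nlinarith [mul_nonneg hx'.le hu]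
  -- V t ≤ M
  have hVleM : ∀ t ∈ Set.Ici (0:ℝ), V t ≤ M := by
    intro t ht
    have hnn : 0 ≤ ∫ x in Set.Ioi (0:ℝ), x * u t x := by
      refine setIntegral_nonneg measurableSet_Ioi fun x hx => ?_
      have hx' : (0:ℝ) < x := hx
      have hu := hset.u_nonneg t ht x (Set.mem_Ici.mpr (le_of_lt hx))
      exact mul_nonneg hx'.le hu
    have := hset.mass t ht
    linarith
  -- d x ≥ d 0 + α x
  have hdlb : ∀ x ∈ Set.Ici (0:ℝ), d 0 + α * x ≤ d x := by
    intro x hx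
    have hcont : ContinuousOn d (Set.Ici 0) := fun y hy =>
      (hD.hasDeriv y hy).continuousWithinAt
    have hdiff : DifferentiableOn ℝ d (interior (Set.Ici (0:ℝ))) := by
      rw [interior_Ici]
      intro y hy
      exact ((hD.hasDeriv y (Set.mem_Ici.mpr (le_of_lt hy))).hasDerivAt
        (Ici_mem_nhds hy)).differentiableAt.differentiableWithinAt
    have hge : ∀ y ∈ interior (Set.Ici (0:ℝ)), α ≤ deriv d y := by
      rw [interior_Ici]
      intro y hy
      rw [((hD.hasDeriv y (Set.mem_Ici.mpr (le_of_lt hy))).hasDerivAt (Ici_mem_nhds hy)).deriv]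
      exact hD.deriv_lb y (Set.mem_Ici.mpr (le_of_lt hy))
    have := (convex_Ici (0:ℝ)).mul_sub_le_image_sub_of_le_deriv hcont hdiff hge
      0 self_mem_Ici x hx hx
    linarith
  -- key differential inequality : α * (M - V t) ≤ V' t
  have hkey : ∀ t ∈ Set.Ici (0:ℝ), α * (M - V t) ≤ V' t := by
    intro t ht
    have hode := hset.V_ode t ht
    have hrw : V' t = ∫ x in Set.Ioi (0:ℝ), (d x - V t) * u t x := by
      have h1 : ∫ x in Set.Ioi (0:ℝ), (d x - V t) * u t x
          = (∫ x in Set.Ioi (0:ℝ), d x * u t x) - ∫ x in Set.Ioi (0:ℝ), V t * u t x := by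
        rw [← MeasureTheory.integral_sub (hset.du_int t ht) ((hu_int t ht).const_mul (V t))]
        congr 1; funext x; ring
      rw [hode, h1, MeasureTheory.integral_const_mul]
      ring
    have hmono : ∫ x in Set.Ioi (0:ℝ), α * (x * u t x) ≤
        ∫ x in Set.Ioi (0:ℝ), (d x - V t) * u t x := by
      have hint2 : IntegrableOn (fun x => (d x - V t) * u t x) (Set.Ioi 0) := by
        refine ((hset.du_int t ht).sub ((hu_int t ht).const_mul (V t))).congr
          (ae_of_all _ fun x => ?_)
        show d x * u t x - V t * u t x = _
        ring
      refine setIntegral_mono_on ((hxu_int t ht).const_mul α) hint2 measurableSet_Ioi ?_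
      intro x hx
      have hx' : (0:ℝ) < x := hx
      have hu := hset.u_nonneg t ht x (Set.mem_Ici.mpr (le_of_lt hx))
      have hd := hdlb x (Set.mem_Ici.mpr (le_of_lt hx))
      have hVM := hVleM t ht
      nlinarith
    have hval : ∫ x in Set.Ioi (0:ℝ), α * (x * u t x) = α * (M - V t) := by
      rw [MeasureTheory.integral_const_mul]
      have := hset.mass t ht
      have : ∫ x in Set.Ioi (0:ℝ), x * u t x = M - V t := by linarith
      rw [this]
    rw [hrw]; rw [hval] at hmono; exact hmono
  -- g is antitone
  set g : ℝ → ℝ := fun t => (M - V t) * Real.exp (α * t) with hg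
  have hganti : AntitoneOn g (Set.Ici 0) := by
    refine antitoneOn_of_deriv_nonpos (convex_Ici 0) ?_ ?_ ?_
    · exact (continuousOn_const.sub fun t ht => (hVd t ht).continuousWithinAt).mul
        (Real.continuous_exp.comp (continuous_const.mul continuous_id)).continuousOn
    · rw [interior_Ici]
      intro t ht
      have hVt : HasDerivAt V (V' t) t :=
        (hVd t (Set.mem_Ici.mpr (le_of_lt ht))).hasDerivAt (Ici_mem_nhds ht)
      have : HasDerivAt g ((-V' t) * Real.exp (α * t)
          + (M - V t) * (Real.exp (α * t) * α)) t := by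
        have h1 : HasDerivAt (fun s => M - V s) (-V' t) t := by
          exact hVt.const_sub M
        have h2 : HasDerivAt (fun s => Real.exp (α * s)) (Real.exp (α * t) * α) t := by
          simpa using ((hasDerivAt_id t).const_mul α).exp
        exact h1.mul h2
      exact this.differentiableAt.differentiableWithinAt
    · rw [interior_Ici]
      intro t ht
      have hVt : HasDerivAt V (V' t) t :=
        (hVd t (Set.mem_Ici.mpr (le_of_lt ht))).hasDerivAt (Ici_mem_nhds ht)
      have hgd : HasDerivAt g ((-V' t) * Real.exp (α * t)
          + (M - V t) * (Real.exp (α * t) * α)) t := by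
        have h1 : HasDerivAt (fun s => M - V s) (-V' t) t := by
          exact hVt.const_sub M
        have h2 : HasDerivAt (fun s => Real.exp (α * s)) (Real.exp (α * t) * α) t := by
          simpa using ((hasDerivAt_id t).const_mul α).exp
        exact h1.mul h2
      rw [hgd.deriv]
      have hk := hkey t (Set.mem_Ici.mpr (le_of_lt ht))
      have he : (0:ℝ) < Real.exp (α * t) := Real.exp_pos _
      nlinarith
  -- conclusion
  intro t ht
  have habs : |M - V t| = M - V t := abs_of_nonneg (by linarith [hVleM t ht])
  rw [habs]
  have hle : g t ≤ g 0 := hganti self_mem_Ici ht ht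
  have hg0 : g 0 = M - V 0 := by simp [hg]
  have he : (0:ℝ) < Real.exp (α * t) := Real.exp_pos _
  have : (M - V t) * Real.exp (α * t) ≤ M - V 0 := by rw [← hg0]; exact hle
  have hexp : Real.exp (-α * t) = (Real.exp (α * t))⁻¹ := by
    rw [← Real.exp_neg]; ring_nf
  rw [hexp]
  have h2 := mul_le_mul_of_nonneg_right this (le_of_lt (inv_pos.2 he))
  calc M - V t = (M - V t) * Real.exp (α * t) * (Real.exp (α * t))⁻¹ := by
        field_simp
    _ ≤ (M - V 0) * (Real.exp (α * t))⁻¹ := h2
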